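/- Let n ≥ 1, let α, β satisfy 0 ≤ α < 1/(n+1) and 0 ≤ β < 1/(n+1), and let Φ ∈ COMFORT(Δ_n) be such that Φ restricts to a homeomorphism of ♣_{n,α} onto ♣_{n,β}. Let x ∈ ♣_{n,α} ∩ Sponge(Δ_n), so that x has exactly one component equal to α, say x_q = α. Then Φ(x) has exactly one component equal to β and it occurs at the same index: Φ(x)_q = β and Φ(x)_i ≠ β for every i ≠ q. -/

import Mathlib

open scoped BigOperators

noncomputable section

/-- `Spx k` is the standard simplex on `k` coordinates, i.e. the standard simplex
`Δ_{k-1}` of the paper, as a subspace of `ℝ^k`. -/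
abbrev Spx (k : ℕ) : Type := {x : Fin k → ℝ // x ∈ stdSimplex ℝ (Fin k)}

lemma perm_mem {k : ℕ} (ϑ : Equiv.Perm (Fin k)) {x : Fin k → ℝ}
    (hx : x ∈ stdSimplex ℝ (Fin k)) :
    (fun i => x (ϑ i)) ∈ stdSimplex ℝ (Fin k) :=
  ⟨fun i => hx.1 (ϑ i), (Equiv.sum_comp ϑ x).trans hx.2⟩

/-- membership of `COMFORT (Δ_n)`: a self-homeomorphism of the standard simplex which
(i) respects coordinate permutations and (ii) keeps the order. -/
structure IsComfort {n : ℕ} (F : Spx (n+1) ≃ₜ Spx (n+1)) : Prop where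
  perm : ∀ (ϑ : Equiv.Perm (Fin (n+1))) (x : Spx (n+1)),
      ((F ⟨fun i => x.1 (ϑ i), perm_mem ϑ x.2⟩ : Spx (n+1)) : Fin (n+1) → ℝ)
        = fun i => (F x).1 (ϑ i)
  mono : ∀ (x : Spx (n+1)) (i j : Fin (n+1)), x.1 i ≤ x.1 j → (F x).1 i ≤ (F x).1 j

/-- the `α`-cross `♣_{n,α}` of `Δ_n`. -/
def cross (n : ℕ) (α : ℝ) : Set (Spx (n+1)) := {x | ∃ j, x.1 j = α}

/-- the boundary `BOU_n = ♣_{n,0}` of `Δ_n`. -/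
def bou (n : ℕ) : Set (Spx (n+1)) := cross n 0

/-- the barycenter `Center_n` of `Δ_n`. -/
def center (n : ℕ) : Spx (n+1) :=
  ⟨fun _ => 1/((n:ℝ)+1), by
    constructor
    · intro i
      positivity
    · rw [Finset.sum_const, Finset.card_univ, Fintype.card_fin, nsmul_eq_mul]
      push_cast
      field_simp⟩

/-- the minimal coordinate of a point of `Δ_n`. -/
def minCoord {n : ℕ} (x : Spx (n+1)) : ℝ :=
  Finset.univ.inf' Finset.univ_nonempty x.1

/-- the `α`-layer `Layer_{n,α}` of `Δ_n`. -/
def layer (n : ℕ) (α : ℝ) : Set (Spx (n+1)) := {x | minCoord x = α}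

/-- `Sponge (Δ_n)`: the points of `Δ_n` with pairwise distinct coordinates. -/
def sponge (n : ℕ) : Set (Spx (n+1)) := {x | ∀ i j, x.1 i = x.1 j → i = j}

-- auxiliary defs/lemmas

def permPt {n : ℕ} (ϑ : Equiv.Perm (Fin (n+1))) (x : Spx (n+1)) : Spx (n+1) :=
  ⟨fun i => x.1 (ϑ i), perm_mem ϑ x.2⟩

lemma phi_perm {n : ℕ} {Φ : Spx (n+1) ≃ₜ Spx (n+1)} (hΦ : IsComfort Φ)
    (ϑ : Equiv.Perm (Fin (n+1))) (x : Spx (n+1)) (i : Fin (n+1)) :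
    (Φ (permPt ϑ x)).1 i = (Φ x).1 (ϑ i) :=
  congrFun (hΦ.perm ϑ x) i

lemma phi_lt {n : ℕ} {Φ : Spx (n+1) ≃ₜ Spx (n+1)} (hΦ : IsComfort Φ)
    (x : Spx (n+1)) {i j : Fin (n+1)} (h : x.1 i < x.1 j) :
    (Φ x).1 i < (Φ x).1 j := by
  rcases lt_or_eq_of_le (hΦ.mono x i j h.le) with h' | h'
  · exact h'
  exfalso
  set ϑ := Equiv.swap i j with hϑ
  have key : Φ (permPt ϑ x) = Φ x := by
    apply Subtype.ext
    rw [show ((Φ (permPt ϑ x)).1 : Fin (n+1) → ℝ) = fun k => (Φ x).1 (ϑ k) from hΦ.perm ϑ x]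
    funext k
    rcases eq_or_ne k i with rfl | hki
    · simpa [hϑ, Equiv.swap_apply_left] using h'.symm
    rcases eq_or_ne k j with rfl | hkj
    · simpa [hϑ, Equiv.swap_apply_right] using h'
    · simp [hϑ, Equiv.swap_apply_of_ne_of_ne hki hkj]
  have h2 := Φ.injective key
  have h3 : x.1 (ϑ i) = x.1 i := congrFun (congrArg Subtype.val h2) i
  rw [show ϑ i = j from Equiv.swap_apply_left i j] at h3
  exact absurd h3 h.ne'

lemma phi_eq {n : ℕ} {Φ : Spx (n+1) ≃ₜ Spx (n+1)} (hΦ : IsComfort Φ)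
    (x : Spx (n+1)) {i j : Fin (n+1)} (h : (Φ x).1 i = (Φ x).1 j) :
    x.1 i = x.1 j := by
  rcases lt_trichotomy (x.1 i) (x.1 j) with h' | h' | h'
  · exact absurd h (phi_lt hΦ x h').ne
  · exact h'
  · exact absurd h.symm (phi_lt hΦ x h').ne

lemma isComfort_symm {n : ℕ} {Φ : Spx (n+1) ≃ₜ Spx (n+1)} (hΦ : IsComfort Φ) :
    IsComfort Φ.symm where
  perm ϑ y := by
    set x := Φ.symm y with hx
    have key : permPt ϑ y = Φ (permPt ϑ x) := by
      apply Subtype.ext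
      rw [show ((Φ (permPt ϑ x)).1 : Fin (n+1) → ℝ) = fun i => (Φ x).1 (ϑ i) from hΦ.perm ϑ x]
      simp [permPt, hx]
    show ((Φ.symm (permPt ϑ y)).1 : Fin (n+1) → ℝ) = fun i => (Φ.symm y).1 (ϑ i)
    rw [key, Φ.symm_apply_apply]
    rfl
  mono y i j h := by
    by_contra hlt
    push_neg at hlt
    have h2 := phi_lt hΦ (Φ.symm y) hlt
    rw [Φ.apply_symm_apply] at h2
    exact absurd h (not_le.mpr h2)

lemma hmap_symm {n : ℕ} {α β : ℝ} {Φ : Spx (n+1) ≃ₜ Spx (n+1)}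
    (hmap : ⇑Φ '' cross n α = cross n β) :
    ⇑Φ.symm '' cross n β = cross n α := by
  rw [← hmap, ← Set.image_comp]
  simp

lemma preconn {n : ℕ} (α : ℝ) (S : Set (Fin (n+1))) :
    IsPreconnected {z : Spx (n+1) | (∀ i ∈ S, z.1 i < α) ∧ (∀ i ∉ S, α < z.1 i)} := by
  set E : Set (Fin (n+1) → ℝ) := {y | (∀ i ∈ S, y i < α) ∧ (∀ i ∉ S, α < y i)} with hE
  have hconv : Convex ℝ (E ∩ stdSimplex ℝ (Fin (n+1))) := by
    refine Convex.inter ?_ (convex_stdSimplex ℝ _)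
    intro u hu v hv a b ha hb hab
    constructor
    · intro i hi
      have := convex_Iio α (hu.1 i hi) (hv.1 i hi) ha hb hab
      simpa using this
    · intro i hi
      have := convex_Ioi α (hu.2 i hi) (hv.2 i hi) ha hb hab
      simpa using this
  have himg : Subtype.val '' {z : Spx (n+1) | z.1 ∈ E} = E ∩ stdSimplex ℝ (Fin (n+1)) := by
    ext y
    constructor
    · rintro ⟨z, hz, rfl⟩; exact ⟨hz, z.2⟩
    · rintro ⟨hy, hmem⟩; exact ⟨⟨y, hmem⟩, hy, rfl⟩
  have h2 := hconv.isPreconnected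
  rw [← himg] at h2
  exact (Topology.IsInducing.subtypeVal.isPreconnected_image).mp h2

lemma constancy {n : ℕ} {β : ℝ} {Φ : Spx (n+1) ≃ₜ Spx (n+1)} {C : Set (Spx (n+1))}
    (hC : IsPreconnected C) (hne : ∀ w ∈ C, ∀ i, (Φ w).1 i ≠ β)
    {z z' : Spx (n+1)} (hz : z ∈ C) (hz' : z' ∈ C) {i : Fin (n+1)}
    (h : (Φ z').1 i < β) : (Φ z).1 i < β := by
  set f : Spx (n+1) → ℝ := fun w => (Φ w).1 i with hf
  have hcont : Continuous f := (continuous_apply i).comp (continuous_subtype_val.comp Φ.continuous)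
  by_contra hcon
  have hzv : z ∈ f ⁻¹' Set.Ioi β := Set.mem_preimage.mpr (Set.mem_Ioi.mpr
    (((hne z hz i).lt_or_gt).resolve_left hcon))
  have hcover : C ⊆ f ⁻¹' Set.Iio β ∪ f ⁻¹' Set.Ioi β := by
    intro w hw
    rcases (hne w hw i).lt_or_gt with h' | h'
    · exact Or.inl (Set.mem_preimage.mpr (Set.mem_Iio.mpr h'))
    · exact Or.inr (Set.mem_preimage.mpr (Set.mem_Ioi.mpr h'))
  have hz'u : z' ∈ f ⁻¹' Set.Iio β := Set.mem_preimage.mpr (Set.mem_Iio.mpr h)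
  have hne1 : (C ∩ f ⁻¹' Set.Iio β).Nonempty := ⟨z', hz', hz'u⟩
  have hne2 : (C ∩ f ⁻¹' Set.Ioi β).Nonempty := ⟨z, hz, hzv⟩
  have hop1 : IsOpen (f ⁻¹' Set.Iio β) := hcont.isOpen_preimage _ (isOpen_Iio (a := β))
  have hop2 : IsOpen (f ⁻¹' Set.Ioi β) := hcont.isOpen_preimage _ (isOpen_Ioi (a := β))
  obtain ⟨w, _, hw1, hw2⟩ := hC (f ⁻¹' Set.Iio β) (f ⁻¹' Set.Ioi β) hop1 hop2 hcover hne1 hne2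
  have hw1' : f w < β := Set.mem_Iio.mp hw1
  have hw2' : β < f w := Set.mem_Ioi.mp hw2
  linarith

lemma sum_beta_contra {n : ℕ} {β : ℝ} (hβ1 : ((n:ℝ)+1) * β ≤ 1)
    (w : Spx (n+1)) (hall : ∀ i, w.1 i < β) : False := by
  have hsum := w.2.2
  have h1 : (1:ℝ) < ∑ _i : Fin (n+1), β := by
    rw [← hsum]
    exact Finset.sum_lt_sum_of_nonempty ⟨0, Finset.mem_univ 0⟩ (fun i _ => hall i)
  rw [Finset.sum_const, Finset.card_univ, Fintype.card_fin, nsmul_eq_mul] at h1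
  push_cast at h1
  linarith

lemma nplus1_beta {n : ℕ} {β : ℝ} (hβ1 : β < 1/((n:ℝ)+1)) : ((n:ℝ)+1) * β ≤ 1 := by
  have hpos : (0:ℝ) < (n:ℝ)+1 := by positivity
  rw [lt_div_iff₀ hpos] at hβ1
  linarith

lemma cross_ne {n : ℕ} {α β : ℝ} {Φ : Spx (n+1) ≃ₜ Spx (n+1)}
    (hmap : ⇑Φ '' cross n α = cross n β) {S : Set (Fin (n+1))} {w : Spx (n+1)}
    (hw : w ∈ {w : Spx (n+1) | (∀ i ∈ S, w.1 i < α) ∧ (∀ i ∉ S, α < w.1 i)}) :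
    ∀ i, (Φ w).1 i ≠ β := by
  intro i hi
  have hmem : Φ w ∈ cross n β := ⟨i, hi⟩
  rw [← hmap] at hmem
  obtain ⟨w', hw', he⟩ := hmem
  cases Φ.injective he
  obtain ⟨j, hj⟩ := hw'
  rcases Classical.em (j ∈ S) with hjS | hjS
  · exact absurd hj (ne_of_lt (hw.1 j hjS))
  · exact absurd hj (ne_of_gt (hw.2 j hjS))

lemma claim_out {n : ℕ} {α β : ℝ} (hβ1 : β < 1/((n:ℝ)+1))
    {Φ : Spx (n+1) ≃ₜ Spx (n+1)} (hΦ : IsComfort Φ)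
    (hmap : ⇑Φ '' cross n α = cross n β)
    {S : Set (Fin (n+1))} {z : Spx (n+1)}
    (h1 : ∀ i ∈ S, z.1 i < α) (h2 : ∀ i ∉ S, α < z.1 i) :
    ∀ i ∉ S, β < (Φ z).1 i := by
  set C := {w : Spx (n+1) | (∀ i ∈ S, w.1 i < α) ∧ (∀ i ∉ S, α < w.1 i)} with hCdef
  have hzC : z ∈ C := ⟨h1, h2⟩
  have hC := preconn α S
  have hne : ∀ w ∈ C, ∀ i, (Φ w).1 i ≠ β := fun w hw => cross_ne hmap hw
  intro i0 hi0
  by_contra hcon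
  push_neg at hcon
  have hlt : (Φ z).1 i0 < β := lt_of_le_of_ne hcon (hne z hzC i0)
  have hall : ∀ i, (Φ z).1 i < β := by
    intro i
    rcases Classical.em (i ∈ S) with hiS | hiS
    · exact lt_of_le_of_lt (hΦ.mono z i i0 (le_of_lt (lt_trans (h1 i hiS) (h2 i0 hi0)))) hlt
    · set ϑ := Equiv.swap i0 i with hϑ
      have hϑout : ϑ i0 = i := Equiv.swap_apply_left i0 i
      have hz' : permPt ϑ z ∈ C := by
        constructor
        · intro k hk
          have hk1 : k ≠ i0 := by rintro rfl; exact hi0 hk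
          have hk2 : k ≠ i := by rintro rfl; exact hiS hk
          show z.1 (ϑ k) < α
          rw [hϑ, Equiv.swap_apply_of_ne_of_ne hk1 hk2]
          exact h1 k hk
        · intro k hk
          show α < z.1 (ϑ k)
          rcases eq_or_ne k i0 with rfl | h0
          · rw [hϑout]; exact h2 i hiS
          rcases eq_or_ne k i with rfl | hki
          · rw [hϑ, Equiv.swap_apply_right]; exact h2 i0 hi0
          · rw [hϑ, Equiv.swap_apply_of_ne_of_ne h0 hki]; exact h2 k hk
      have hlt' : (Φ (permPt ϑ z)).1 i < β := by
        rw [phi_perm hΦ, hϑ, Equiv.swap_apply_right]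
        exact hlt
      exact constancy hC hne hzC hz' hlt'
  exact sum_beta_contra (nplus1_beta hβ1) (Φ z) hall

lemma claim_in {n : ℕ} {α β : ℝ} (hα1 : α < 1/((n:ℝ)+1)) (hβ1 : β < 1/((n:ℝ)+1))
    {Φ : Spx (n+1) ≃ₜ Spx (n+1)} (hΦ : IsComfort Φ)
    (hmap : ⇑Φ '' cross n α = cross n β)
    {S : Set (Fin (n+1))} {z : Spx (n+1)}
    (h1 : ∀ i ∈ S, z.1 i < α) (h2 : ∀ i ∉ S, α < z.1 i) :
    ∀ i ∈ S, (Φ z).1 i < β := by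
  set C := {w : Spx (n+1) | (∀ i ∈ S, w.1 i < α) ∧ (∀ i ∉ S, α < w.1 i)} with hCdef
  have hzC : z ∈ C := ⟨h1, h2⟩
  have hC := preconn α S
  have hne : ∀ w ∈ C, ∀ i, (Φ w).1 i ≠ β := fun w hw => cross_ne hmap hw
  intro i1 hi1
  by_contra hcon
  have hgt : β < (Φ z).1 i1 := ((hne z hzC i1).lt_or_gt).resolve_left hcon
  have hallS : ∀ i ∈ S, ¬ (Φ z).1 i < β := by
    intro i hiS hilt
    set ϑ := Equiv.swap i1 i with hϑ
    have hz' : permPt ϑ z ∈ C := by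
      constructor
      · intro k hk
        show z.1 (ϑ k) < α
        rcases eq_or_ne k i1 with rfl | h0
        · rw [hϑ, Equiv.swap_apply_left]; exact h1 i hiS
        rcases eq_or_ne k i with rfl | hki
        · rw [hϑ, Equiv.swap_apply_right]; exact h1 i1 hi1
        · rw [hϑ, Equiv.swap_apply_of_ne_of_ne h0 hki]; exact h1 k hk
      · intro k hk
        have hk1 : k ≠ i1 := by rintro rfl; exact hk hi1
        have hk2 : k ≠ i := by rintro rfl; exact hk hiS
        show α < z.1 (ϑ k)
        rw [hϑ, Equiv.swap_apply_of_ne_of_ne hk1 hk2]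
        exact h2 k hk
    have hlt' : (Φ (permPt ϑ z)).1 i1 < β := by
      rw [phi_perm hΦ, hϑ, Equiv.swap_apply_left]
      exact hilt
    exact absurd (constancy hC hne hzC hz' hlt') (not_lt.mpr hgt.le)
  have hall : ∀ i, β < (Φ z).1 i := by
    intro i
    rcases Classical.em (i ∈ S) with hiS | hiS
    · exact ((hne z hzC i).lt_or_gt).resolve_left (hallS i hiS)
    · exact claim_out hβ1 hΦ hmap h1 h2 i hiS
  have hout := claim_out hα1 (isComfort_symm hΦ) (hmap_symm hmap)
      (S := (∅ : Set (Fin (n+1)))) (z := Φ z)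
      (by intro i hi; exact absurd hi (Set.notMem_empty i))
      (fun i _ => hall i)
  have := hout i1 (Set.notMem_empty i1)
  rw [Φ.symm_apply_apply] at this
  exact absurd (h1 i1 hi1) (not_lt.mpr this.le)

theorem comfort_cross_sponge_single_component (n : ℕ) (hn : 1 ≤ n) (α β : ℝ)
    (hα0 : 0 ≤ α) (hα1 : α < 1/((n:ℝ)+1))
    (hβ0 : 0 ≤ β) (hβ1 : β < 1/((n:ℝ)+1))
    (Φ : Spx (n+1) ≃ₜ Spx (n+1)) (hΦ : IsComfort Φ)
    (hmap : ⇑Φ '' cross n α = cross n β)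
    (x : Spx (n+1)) (hx : x ∈ cross n α ∩ sponge n)
    (q : Fin (n+1)) (hq : x.1 q = α) :
    (Φ x).1 q = β ∧ ∀ i : Fin (n+1), i ≠ q → (Φ x).1 i ≠ β := by
  classical
  obtain ⟨hxc, hsp⟩ := hx
  set S : Set (Fin (n+1)) := {i | x.1 i < α} with hSdef
  have hqS : q ∉ S := by
    simp only [hSdef, Set.mem_setOf_eq, hq]
    exact lt_irrefl α
  have hother : ∀ i, i ∉ S → i ≠ q → α < x.1 i := by
    intro i hiS hiq
    rcases lt_trichotomy (x.1 i) α with h | h | h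
    · exact absurd h hiS
    · exact absurd (hsp i q (by rw [h, hq])) hiq
    · exact h
  have hex : ∃ i', 1/((n:ℝ)+1) ≤ x.1 i' := by
    by_contra hcon
    push_neg at hcon
    refine sum_beta_contra (β := 1/((n:ℝ)+1)) ?_ x hcon
    have hpos : (0:ℝ) < (n:ℝ)+1 := by positivity
    rw [mul_one_div, div_self (ne_of_gt hpos)]
  obtain ⟨i', hi'⟩ := hex
  have hi'α : α < x.1 i' := lt_of_lt_of_le hα1 hi'
  have hi'q : i' ≠ q := by
    rintro rfl
    rw [hq] at hi'α
    exact lt_irrefl α hi'α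
  have hi'S : i' ∉ S := by
    simp only [hSdef, Set.mem_setOf_eq]
    exact not_lt.mpr hi'α.le
  set δ : ℝ := x.1 i' - α with hδdef
  have hδpos : 0 < δ := sub_pos.mpr hi'α
  set cl : ℝ → ℝ := fun s => max (-α) (min s (δ/2)) with hcldef
  have hclcont : Continuous cl := continuous_const.max (continuous_id.min continuous_const)
  have hcl0 : cl 0 = 0 := by
    simp only [hcldef]
    rw [min_eq_left (by linarith), max_eq_right (by linarith)]
  have hcllb : ∀ s, -α ≤ cl s := fun s => le_max_left _ _
  have hclub : ∀ s, cl s ≤ δ/2 := fun s => max_le (by linarith) (min_le_right _ _)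
  set y : ℝ → (Fin (n+1) → ℝ) :=
    fun s i => x.1 i + cl s * (Pi.single (M := fun _ => ℝ) q 1 i - Pi.single (M := fun _ => ℝ) i' 1 i) with hydef
  have hyq : ∀ s, y s q = α + cl s := by
    intro s
    simp only [hydef, Pi.single_eq_same, Pi.single_eq_of_ne (Ne.symm hi'q), hq]
    ring
  have hyi' : ∀ s, y s i' = x.1 i' - cl s := by
    intro s
    simp only [hydef, Pi.single_eq_same, Pi.single_eq_of_ne hi'q]
    ring
  have hyo : ∀ s i, i ≠ q → i ≠ i' → y s i = x.1 i := by
    intro s i hiq hii'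
    simp only [hydef, Pi.single_eq_of_ne hiq, Pi.single_eq_of_ne hii']
    ring
  have hymem : ∀ s, y s ∈ stdSimplex ℝ (Fin (n+1)) := by
    intro s
    constructor
    · intro i
      rcases eq_or_ne i q with rfl | hiq
      · rw [hyq]
        have := hcllb s
        linarith
      rcases eq_or_ne i i' with rfl | hii'
      · rw [hyi']
        have := hclub s
        have hxi := x.2.1 i
        simp only [hδdef] at this ⊢
        linarith
      · rw [hyo s i hiq hii']
        exact x.2.1 i
    · simp only [hydef]
      rw [Finset.sum_add_distrib, ← Finset.mul_sum, Finset.sum_sub_distrib,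
        Fintype.sum_pi_single' (M := ℝ) q 1, Fintype.sum_pi_single' (M := ℝ) i' 1]
      rw [x.2.2]
      ring
  set z : ℝ → Spx (n+1) := fun s => ⟨y s, hymem s⟩ with hzdef
  have hzcont : Continuous z := by
    refine Continuous.subtype_mk ?_ _
    apply continuous_pi
    intro i
    exact continuous_const.add (hclcont.mul continuous_const)
  have hz0 : z 0 = x := by
    apply Subtype.ext
    funext i
    show y 0 i = x.1 i
    simp only [hydef, hcl0]
    ring
  have htendG : ∀ (i : Fin (n+1)) (l : Filter ℝ), l ≤ nhds 0 →
      Filter.Tendsto (fun s => (Φ (z s)).1 i) l (nhds ((Φ x).1 i)) := by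
    intro i l hl
    have hc : Continuous fun s : ℝ => (Φ (z s)).1 i :=
      (continuous_apply i).comp (continuous_subtype_val.comp (Φ.continuous.comp hzcont))
    have := hc.tendsto 0
    rw [hz0] at this
    exact this.mono_left hl
  have hclid_pos : ∀ s ∈ Set.Ioo (0:ℝ) (δ/2), cl s = s := by
    intro s hs
    simp only [hcldef]
    rw [min_eq_left hs.2.le, max_eq_right (by linarith [hs.1])]
  have hpat1 : ∀ s ∈ Set.Ioo (0:ℝ) (δ/2),
      (∀ i ∈ S, (z s).1 i < α) ∧ (∀ i ∉ S, α < (z s).1 i) := by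
    intro s hs
    have hcls := hclid_pos s hs
    constructor
    · intro i hiS
      have hiq : i ≠ q := by rintro rfl; exact hqS hiS
      have hii' : i ≠ i' := by rintro rfl; exact hi'S hiS
      show y s i < α
      rw [hyo s i hiq hii']
      exact hiS
    · intro i hiS
      rcases eq_or_ne i q with rfl | hiq
      · show α < y s i
        rw [hyq, hcls]
        linarith [hs.1]
      rcases eq_or_ne i i' with rfl | hii'
      · show α < y s i
        rw [hyi', hcls]
        have h2 := hs.2
        simp only [hδdef] at h2
        linarith
      · show α < y s i
        rw [hyo s i hiq hii']
        exact hother i hiS hiq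
  have hge : β ≤ (Φ x).1 q := by
    refine ge_of_tendsto (htendG q (nhdsWithin (0:ℝ) (Set.Ioi 0)) nhdsWithin_le_nhds) ?_
    filter_upwards [Ioo_mem_nhdsGT (half_pos hδpos)] with s hs
    exact (claim_out hβ1 hΦ hmap (hpat1 s hs).1 (hpat1 s hs).2 q hqS).le
  have hΦc : Φ x ∈ cross n β := by
    rw [← hmap]
    exact Set.mem_image_of_mem _ hxc
  obtain ⟨p, hp⟩ := hΦc
  have hpq : p = q := by
    by_contra hne
    rcases lt_trichotomy (x.1 p) (x.1 q) with hcmp | hcmp | hcmp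
    · have hα : 0 < α := lt_of_le_of_lt (x.2.1 p) (by rw [hq] at hcmp; exact hcmp)
      have hclid_neg : ∀ s ∈ Set.Ioo (-α) (0:ℝ), cl s = s := by
        intro s hs
        simp only [hcldef]
        rw [min_eq_left (by linarith [hs.2]), max_eq_right hs.1.le]
      have hpat2 : ∀ s ∈ Set.Ioo (-α) (0:ℝ),
          (∀ i ∈ S ∪ {q}, (z s).1 i < α) ∧ (∀ i ∉ S ∪ {q}, α < (z s).1 i) := by
        intro s hs
        have hcls := hclid_neg s hs
        constructor
        · intro i hiSq
          rcases hiSq with hiS | hiq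
          · have hiq : i ≠ q := by rintro rfl; exact hqS hiS
            have hii' : i ≠ i' := by rintro rfl; exact hi'S hiS
            show y s i < α
            rw [hyo s i hiq hii']
            exact hiS
          · rcases hiq with rfl
            show y s i < α
            rw [hyq, hcls]
            linarith [hs.2]
        · intro i hiSq
          have hiS : i ∉ S := fun h => hiSq (Set.mem_union_left _ h)
          have hiq : i ≠ q := fun h => hiSq (Set.mem_union_right _ (h ▸ Set.mem_singleton q))
          rcases eq_or_ne i i' with rfl | hii'
          · show α < y s i
            rw [hyi', hcls]
            linarith [hs.2, hi'α]
          · show α < y s i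
            rw [hyo s i hiq hii']
            exact hother i hiS hiq
      have hle : (Φ x).1 q ≤ β := by
        refine le_of_tendsto (htendG q (nhdsWithin (0:ℝ) (Set.Iio 0)) nhdsWithin_le_nhds) ?_
        filter_upwards [Ioo_mem_nhdsLT (neg_lt_zero.mpr hα)] with s hs
        refine (claim_in hα1 hβ1 hΦ hmap (hpat2 s hs).1 (hpat2 s hs).2 q ?_).le
        exact Set.mem_union_right _ (Set.mem_singleton q)
      have hl2 := phi_lt hΦ x hcmp
      rw [hp] at hl2
      linarith
    · exact hne (hsp p q hcmp)
    · have hl2 := phi_lt hΦ x hcmp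
      rw [hp] at hl2
      linarith
  rw [hpq] at hp
  refine ⟨hp, ?_⟩
  intro i hiq hie
  have heq : (Φ x).1 i = (Φ x).1 q := by rw [hie, hp]
  exact hiq (hsp i q (phi_eq hΦ x heq))


end
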